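/- Let γ = 1 − 2π⁻². Then I₀(α) tends to π / √(2(1−γ)) = (1−γ)^{−1} as α tends to γ^{−γ}(1−γ)^{γ−1} from the right. -/

import Mathlib

open MeasureTheory Set Real

noncomputable section

/-- `f_α(t) = α t^{2γ} − t² − 1`. -/
def fA (γ α t : ℝ) : ℝ := α * t ^ (2 * γ) - t ^ 2 - 1

/-- The derivative `f_α'(t) = 2αγ t^{2γ−1} − 2t`. -/
def fA' (γ α t : ℝ) : ℝ := 2 * α * γ * t ^ (2 * γ - 1) - 2 * t

/-- The second derivative `f_α''(t) = 2αγ(2γ−1) t^{2γ−2} − 2`. -/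
def fA'' (γ α t : ℝ) : ℝ := 2 * α * γ * (2 * γ - 1) * t ^ (2 * γ - 2) - 2

/-- `ψ_α := (f_α')² − 2 f_α f_α''`. -/
def psiA (γ α t : ℝ) : ℝ := (fA' γ α t) ^ 2 - 2 * fA γ α t * fA'' γ α t

/-- The left endpoint `ω⁻_α` of the positivity interval of `f_α`. -/
def omegaMinus (γ α : ℝ) : ℝ := sInf {t : ℝ | 0 < t ∧ 0 < fA γ α t}

/-- The right endpoint `ω⁺_α` of the positivity interval of `f_α`. -/
def omegaPlus (γ α : ℝ) : ℝ := sSup {t : ℝ | 0 < t ∧ 0 < fA γ α t}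

/-- `I₀(α) := ∫_{ω⁻_α}^{ω⁺_α} dt / √(f_α(t))`. -/
def I0 (γ α : ℝ) : ℝ :=
  ∫ t in omegaMinus γ α..omegaPlus γ α, 1 / Real.sqrt (fA γ α t)

namespace MyAux

open intervalIntegral

variable {γ α : ℝ}

lemma hasDerivAt_fA {t : ℝ} (ht : 0 < t) : HasDerivAt (fA γ α) (fA' γ α t) t := by
  have h1 : HasDerivAt (fun s : ℝ => s ^ (2 * γ)) (2 * γ * t ^ (2 * γ - 1)) t :=
    Real.hasDerivAt_rpow_const (Or.inl ht.ne')
  have h := ((h1.const_mul α).sub (hasDerivAt_pow 2 t)).sub_const 1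
  refine h.congr_deriv ?_
  unfold fA'
  push_cast
  ring

lemma hasDerivAt_fA' {t : ℝ} (ht : 0 < t) : HasDerivAt (fA' γ α) (fA'' γ α t) t := by
  have h1 : HasDerivAt (fun s : ℝ => s ^ (2 * γ - 1)) ((2 * γ - 1) * t ^ (2 * γ - 1 - 1)) t :=
    Real.hasDerivAt_rpow_const (Or.inl ht.ne')
  have h := (h1.const_mul (2 * α * γ)).sub ((hasDerivAt_id t).const_mul 2)
  refine h.congr_deriv ?_
  unfold fA''
  have : 2 * γ - 1 - 1 = 2 * γ - 2 := by ring
  rw [this]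
  ring

lemma continuous_fA (hγ0 : 0 < γ) : Continuous (fA γ α) := by
  unfold fA
  have : Continuous fun t : ℝ => t ^ (2 * γ) := Real.continuous_rpow_const (by linarith)
  fun_prop

lemma fA_strictMonoOn (hγ1 : γ < 1) (hγ0 : 0 < γ) (hα : 0 < α) {tc : ℝ} (htc : 0 < tc)
    (hc : α * γ * tc ^ (2 * γ - 2) = 1) : StrictMonoOn (fA γ α) (Icc 0 tc) := by
  apply strictMonoOn_of_deriv_pos (convex_Icc 0 tc) (continuous_fA hγ0).continuousOn
  intro x hx
  rw [interior_Icc] at hx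
  rw [(hasDerivAt_fA hx.1).deriv]
  unfold fA'
  have hxpow : x ^ (2 * γ - 1) = x ^ (2 * γ - 2) * x := by
    rw [← Real.rpow_add_one hx.1.ne' (2 * γ - 2)]
    ring_nf
  have hlt : tc ^ (2 * γ - 2) < x ^ (2 * γ - 2) :=
    Real.rpow_lt_rpow_of_neg hx.1 hx.2 (by linarith)
  have h1 : 1 < α * γ * x ^ (2 * γ - 2) := by
    calc 1 = α * γ * tc ^ (2 * γ - 2) := hc.symm
    _ < α * γ * x ^ (2 * γ - 2) := by
      apply mul_lt_mul_of_pos_left hlt (by positivity)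
  rw [hxpow]
  nlinarith [hx.1]

lemma fA_strictAntiOn (hγ1 : γ < 1) (hγ0 : 0 < γ) (hα : 0 < α) {tc : ℝ} (htc : 0 < tc)
    (hc : α * γ * tc ^ (2 * γ - 2) = 1) : StrictAntiOn (fA γ α) (Ici tc) := by
  apply strictAntiOn_of_deriv_neg (convex_Ici tc) (continuous_fA hγ0).continuousOn
  intro x hx
  rw [interior_Ici] at hx
  have hxpos : 0 < x := htc.trans hx
  rw [(hasDerivAt_fA hxpos).deriv]
  unfold fA'
  have hxpow : x ^ (2 * γ - 1) = x ^ (2 * γ - 2) * x := by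
    rw [← Real.rpow_add_one hxpos.ne' (2 * γ - 2)]
    ring_nf
  have hlt : x ^ (2 * γ - 2) < tc ^ (2 * γ - 2) :=
    Real.rpow_lt_rpow_of_neg htc hx (by linarith)
  have h1 : α * γ * x ^ (2 * γ - 2) < 1 := by
    calc α * γ * x ^ (2 * γ - 2) < α * γ * tc ^ (2 * γ - 2) := by
          apply mul_lt_mul_of_pos_left hlt (by positivity)
    _ = 1 := hc
  rw [hxpow]
  nlinarith [hxpos]


def aStar (γ : ℝ) : ℝ := γ ^ (-γ) * (1 - γ) ^ (γ - 1)
def tStar (γ : ℝ) : ℝ := Real.sqrt (γ / (1 - γ))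

lemma aStar_pos (hγ0 : 0 < γ) (hγ1 : γ < 1) : 0 < aStar γ := by
  unfold aStar
  have h1 : (0:ℝ) < 1 - γ := by linarith
  positivity

lemma tStar_pos (hγ0 : 0 < γ) (hγ1 : γ < 1) : 0 < tStar γ := by
  unfold tStar
  have h1 : (0:ℝ) < 1 - γ := by linarith
  positivity

lemma tStar_rpow (hγ0 : 0 < γ) (hγ1 : γ < 1) (c : ℝ) :
    (tStar γ) ^ c = (γ / (1 - γ)) ^ (c / 2) := by
  have hx : (0:ℝ) ≤ γ / (1 - γ) := by
    have h1 : (0:ℝ) < 1 - γ := by linarith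
    positivity
  rw [tStar, Real.sqrt_eq_rpow, ← Real.rpow_mul hx]
  norm_num
  rw [mul_comm, mul_one_div]

lemma ratio_rpow (hγ0 : 0 < γ) (hγ1 : γ < 1) (c : ℝ) :
    (γ / (1 - γ)) ^ c = γ ^ c * (1 - γ) ^ (-c) := by
  have h1 : (0:ℝ) < 1 - γ := by linarith
  rw [div_eq_mul_inv, Real.mul_rpow hγ0.le (by positivity), ← Real.rpow_neg_one,
    ← Real.rpow_mul h1.le, neg_one_mul]

lemma key1 (hγ0 : 0 < γ) (hγ1 : γ < 1) : aStar γ * γ * (tStar γ) ^ (2 * γ - 2) = 1 := by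
  have h1 : (0:ℝ) < 1 - γ := by linarith
  rw [tStar_rpow hγ0 hγ1, show (2 * γ - 2) / 2 = γ - 1 by ring, ratio_rpow hγ0 hγ1, aStar]
  have hγ' : γ = γ ^ (1:ℝ) := (Real.rpow_one γ).symm
  calc γ ^ (-γ) * (1 - γ) ^ (γ - 1) * γ * (γ ^ (γ - 1) * (1 - γ) ^ (-(γ - 1)))
      = (γ ^ (-γ) * γ ^ (1:ℝ) * γ ^ (γ - 1)) * ((1 - γ) ^ (γ - 1) * (1 - γ) ^ (-(γ - 1))) := by
        rw [← hγ']; ring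
    _ = γ ^ (-γ + 1 + (γ - 1)) * (1 - γ) ^ (γ - 1 + -(γ - 1)) := by
        rw [← Real.rpow_add hγ0, ← Real.rpow_add hγ0, ← Real.rpow_add h1]
    _ = 1 := by norm_num

lemma key2 (hγ0 : 0 < γ) (hγ1 : γ < 1) : fA γ (aStar γ) (tStar γ) = 0 := by
  have h1 : (0:ℝ) < 1 - γ := by linarith
  have hsq : (tStar γ) ^ 2 = γ / (1 - γ) := by
    rw [tStar, Real.sq_sqrt (by positivity)]
  have hp : aStar γ * (tStar γ) ^ (2 * γ) = (1 - γ)⁻¹ := by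
    rw [tStar_rpow hγ0 hγ1, show (2 * γ) / 2 = γ by ring, ratio_rpow hγ0 hγ1, aStar]
    calc γ ^ (-γ) * (1 - γ) ^ (γ - 1) * (γ ^ γ * (1 - γ) ^ (-γ))
        = γ ^ (-γ) * γ ^ γ * ((1 - γ) ^ (γ - 1) * (1 - γ) ^ (-γ)) := by ring
      _ = γ ^ (-γ + γ) * (1 - γ) ^ (γ - 1 + -γ) := by
          rw [← Real.rpow_add hγ0, ← Real.rpow_add h1]
      _ = (1 - γ)⁻¹ := by
          norm_num
          rw [show (γ - 1 + -γ) = -1 by ring, Real.rpow_neg_one]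
  unfold fA
  rw [hp, hsq]
  field_simp
  norm_num

lemma key3 (hγ0 : 0 < γ) (hγ1 : γ < 1) : fA'' γ (aStar γ) (tStar γ) = -(4 * (1 - γ)) := by
  unfold fA''
  have h := key1 hγ0 hγ1
  have : 2 * aStar γ * γ * (2 * γ - 1) * tStar γ ^ (2 * γ - 2)
      = 2 * (2 * γ - 1) * (aStar γ * γ * tStar γ ^ (2 * γ - 2)) := by ring
  rw [this, h]
  ring


lemma fA_aStar_neg (hγ0 : 0 < γ) (hγ1 : γ < 1) {t : ℝ} (ht : 0 ≤ t) (hne : t ≠ tStar γ) :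
    fA γ (aStar γ) t < 0 := by
  have hmono := fA_strictMonoOn hγ1 hγ0 (aStar_pos hγ0 hγ1) (tStar_pos hγ0 hγ1) (key1 hγ0 hγ1)
  have hanti := fA_strictAntiOn hγ1 hγ0 (aStar_pos hγ0 hγ1) (tStar_pos hγ0 hγ1) (key1 hγ0 hγ1)
  have h0 := key2 hγ0 hγ1
  rcases lt_or_gt_of_ne hne with h | h
  · have := hmono ⟨ht, h.le⟩ ⟨(tStar_pos hγ0 hγ1).le, le_refl _⟩ h
    linarith
  · have := hanti (mem_Ici.2 (le_refl _)) (mem_Ici.2 h.le) h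
    linarith

/-- concave quadratic lower bound -/
lemma concave_quad {f f' f'' : ℝ → ℝ} {a b c : ℝ} (hab : a < b)
    (hf : ContinuousOn f (Icc a b))
    (h1 : ∀ x ∈ Ioo a b, HasDerivAt f (f' x) x)
    (h2 : ∀ x ∈ Ioo a b, HasDerivAt f' (f'' x) x)
    (ha : f a = 0) (hb : f b = 0)
    (hcc : ∀ x ∈ Ioo a b, f'' x ≤ -(2 * c)) :
    ∀ t ∈ Icc a b, c * ((b - t) * (t - a)) ≤ f t := by
  set g : ℝ → ℝ := fun t => f t - c * ((b - t) * (t - a)) with hg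
  have hq : Continuous fun t : ℝ => c * ((b - t) * (t - a)) := by fun_prop
  have hconc : ConcaveOn ℝ (Icc a b) g := by
    apply concaveOn_of_hasDerivWithinAt2_nonpos (convex_Icc a b)
      (f' := fun x => f' x - c * (a + b - 2 * x)) (f'' := fun x => f'' x + 2 * c)
      (hf.sub hq.continuousOn)
    · intro x hx
      rw [interior_Icc] at hx
      have hquad : HasDerivAt (fun t : ℝ => c * ((b - t) * (t - a))) (c * (a + b - 2 * x)) x := by
        have h := (((hasDerivAt_id x).const_sub b).mul ((hasDerivAt_id x).sub_const a)).const_mul c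
        refine h.congr_deriv ?_
        simp only [id_eq, mul_one]
        ring
      rw [interior_Icc]
      exact ((h1 x hx).sub hquad).hasDerivWithinAt
    · intro x hx
      rw [interior_Icc] at hx
      have hlin : HasDerivAt (fun t : ℝ => c * (a + b - 2 * t)) (c * (-2)) x := by
        have h := (((hasDerivAt_id x).const_mul 2).const_sub (a + b)).const_mul c
        refine h.congr_deriv ?_
        norm_num
      have h := (h2 x hx).sub hlin
      rw [interior_Icc]
      refine h.hasDerivWithinAt.congr_deriv ?_
      ring
    · intro x hx
      rw [interior_Icc] at hx
      have := hcc x hx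
      linarith
  intro t ht
  obtain ⟨hta, htb⟩ := ht
  have hba : (0:ℝ) < b - a := by linarith
  set p : ℝ := (b - t) / (b - a) with hp
  set q : ℝ := (t - a) / (b - a) with hqdef
  have hp0 : 0 ≤ p := div_nonneg (by linarith) hba.le
  have hq0 : 0 ≤ q := div_nonneg (by linarith) hba.le
  have hpq : p + q = 1 := by
    rw [hp, hqdef, ← add_div, show b - t + (t - a) = b - a by ring, div_self hba.ne']
  have hcomb := hconc.2 (left_mem_Icc.2 hab.le) (right_mem_Icc.2 hab.le) hp0 hq0 hpq
  have hpt : p • a + q • b = t := by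
    simp only [smul_eq_mul, hp, hqdef]
    field_simp
    ring
  rw [hpt] at hcomb
  have hga : g a = 0 := by simp [hg, ha]
  have hgb : g b = 0 := by simp [hg, hb]
  rw [hga, hgb] at hcomb
  simp only [smul_eq_mul, mul_zero, add_zero, hg] at hcomb
  linarith

/-- convex quadratic upper bound -/
lemma convex_quad {f f' f'' : ℝ → ℝ} {a b c : ℝ} (hab : a < b)
    (hf : ContinuousOn f (Icc a b))
    (h1 : ∀ x ∈ Ioo a b, HasDerivAt f (f' x) x)
    (h2 : ∀ x ∈ Ioo a b, HasDerivAt f' (f'' x) x)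
    (ha : f a = 0) (hb : f b = 0)
    (hcc : ∀ x ∈ Ioo a b, -(2 * c) ≤ f'' x) :
    ∀ t ∈ Icc a b, f t ≤ c * ((b - t) * (t - a)) := by
  have h := concave_quad (f := fun t => -f t) (f' := fun t => -f' t) (f'' := fun t => -f'' t)
    (c := -c) hab hf.neg (fun x hx => (h1 x hx).neg) (fun x hx => (h2 x hx).neg)
    (by simp [ha]) (by simp [hb])
    (fun x hx => by show -f'' x ≤ -(2 * -c); have := hcc x hx; linarith)
  intro t ht
  have := h t ht
  linarith


lemma meas_inv_sqrt (g : ℝ → ℝ) (hg : Continuous g) :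
    AEStronglyMeasurable (fun x => 1 / Real.sqrt (g x)) (volume : Measure ℝ) := by
  have : Measurable fun x => 1 / Real.sqrt (g x) := by
    simp only [one_div]
    exact ((Real.continuous_sqrt.comp hg).measurable).inv
  exact this.aestronglyMeasurable

lemma intInt_one_div_sqrt_one_sub_sq :
    IntervalIntegrable (fun x : ℝ => 1 / Real.sqrt (1 - x ^ 2)) volume (-1) 1 := by
  have hmeas := meas_inv_sqrt (fun x : ℝ => 1 - x ^ 2) (by fun_prop)
  have hkey : ∀ x : ℝ, x ∈ Icc (-1:ℝ) 1 →
      1 / Real.sqrt (1 - x ^ 2) ≤ (1 - x) ^ (-(1/2) : ℝ) + (1 + x) ^ (-(1/2) : ℝ) := by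
    intro x hx
    obtain ⟨h1, h2⟩ := hx
    have h1x : (0:ℝ) ≤ 1 - x := by linarith
    have h2x : (0:ℝ) ≤ 1 + x := by linarith
    have hb : (0:ℝ) ≤ (1 - x) ^ (-(1/2) : ℝ) + (1 + x) ^ (-(1/2) : ℝ) := by positivity
    rcases le_or_gt x 0 with hx0 | hx0
    · -- use (1+x) bound
      rcases eq_or_lt_of_le h2x with he | hlt
      · rw [show (1:ℝ) - x ^2 = (1-x)*(1+x) by ring, ← he]
        simp
        positivity
      · have hle : 1 + x ≤ 1 - x ^ 2 := by nlinarith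
        have hs : 0 < Real.sqrt (1 + x) := Real.sqrt_pos.2 hlt
        have : 1 / Real.sqrt (1 - x ^ 2) ≤ 1 / Real.sqrt (1 + x) :=
          one_div_le_one_div_of_le hs (Real.sqrt_le_sqrt hle)
        have heq : (1 + x) ^ (-(1/2) : ℝ) = 1 / Real.sqrt (1 + x) := by
          rw [Real.rpow_neg h2x, Real.sqrt_eq_rpow]; norm_num
        rw [heq]
        have hpos : (0:ℝ) ≤ (1 - x) ^ (-(1/2) : ℝ) := by positivity
        linarith
    · -- use (1-x) bound
      rcases eq_or_lt_of_le h1x with he | hlt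
      · rw [show (1:ℝ) - x ^2 = (1-x)*(1+x) by ring, ← he]
        simp
        positivity
      · have hle : 1 - x ≤ 1 - x ^ 2 := by nlinarith
        have hs : 0 < Real.sqrt (1 - x) := Real.sqrt_pos.2 hlt
        have : 1 / Real.sqrt (1 - x ^ 2) ≤ 1 / Real.sqrt (1 - x) :=
          one_div_le_one_div_of_le hs (Real.sqrt_le_sqrt hle)
        have heq : (1 - x) ^ (-(1/2) : ℝ) = 1 / Real.sqrt (1 - x) := by
          rw [Real.rpow_neg h1x, Real.sqrt_eq_rpow]; norm_num
        rw [heq]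
        have hpos : (0:ℝ) ≤ (1 + x) ^ (-(1/2) : ℝ) := by positivity
        linarith
  have hInt1 : IntervalIntegrable (fun x : ℝ => (1 - x) ^ (-(1/2) : ℝ)) volume (-1) 1 := by
    have h := (intervalIntegrable_rpow' (a := 0) (b := 2) (r := -(1/2)) (by norm_num)).comp_sub_left 1
    norm_num at h
    exact h.symm
  have hInt2 : IntervalIntegrable (fun x : ℝ => (1 + x) ^ (-(1/2) : ℝ)) volume (-1) 1 := by
    have h := (intervalIntegrable_rpow' (a := 0) (b := 2) (r := -(1/2)) (by norm_num)).comp_add_right 1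
    norm_num at h
    have h2 : (fun x : ℝ => (1 + x) ^ (-(1/2) : ℝ)) = fun x : ℝ => (x + 1) ^ (-(1/2) : ℝ) := by
      funext x; rw [add_comm]
    rw [h2]
    simpa using h
  apply (hInt1.add hInt2).mono_fun hmeas.restrict
  filter_upwards [ae_restrict_mem measurableSet_Ioc] with x hx
  have hx' : x ∈ Icc (-1:ℝ) 1 := by
    rw [uIoc_of_le (by norm_num : (-1:ℝ) ≤ 1)] at hx
    exact ⟨hx.1.le, hx.2⟩
  have h1x : (0:ℝ) ≤ 1 - x := by linarith [hx'.2]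
  have h2x : (0:ℝ) ≤ 1 + x := by linarith [hx'.1]
  rw [Real.norm_eq_abs, Real.norm_eq_abs, abs_of_nonneg (by positivity),
    abs_of_nonneg (by positivity)]
  exact hkey x hx'

lemma integral_one_div_sqrt_one_sub_sq :
    ∫ x in (-1:ℝ)..1, 1 / Real.sqrt (1 - x ^ 2) = π := by
  have h := integral_eq_sub_of_hasDeriv_right_of_le (f := Real.arcsin)
    (f' := fun x : ℝ => 1 / Real.sqrt (1 - x ^ 2)) (by norm_num : (-1:ℝ) ≤ 1)
    Real.continuous_arcsin.continuousOn
    (fun x hx => ((Real.hasDerivAt_arcsin (ne_of_gt hx.1) (ne_of_lt hx.2)).hasDerivWithinAt))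
    intInt_one_div_sqrt_one_sub_sq
  rw [h, Real.arcsin_one, Real.arcsin_neg_one]
  ring


section C
variable {a b cc : ℝ}

lemma comp_affine_eq (hab : a < b) (hc : 0 < cc) (x : ℝ) :
    1 / Real.sqrt (cc * ((b - ((b - a)/2 * x + (a + b)/2)) * (((b - a)/2 * x + (a + b)/2) - a)))
      = (Real.sqrt cc * ((b - a)/2))⁻¹ * (1 / Real.sqrt (1 - x ^ 2)) := by
  set r := (b - a)/2 with hr
  have hrpos : 0 < r := by rw [hr]; linarith
  have h1 : b - (r * x + (a + b)/2) = r * (1 - x) := by rw [hr]; ring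
  have h2 : (r * x + (a + b)/2) - a = r * (1 + x) := by rw [hr]; ring
  rw [h1, h2, show r * (1 - x) * (r * (1 + x)) = r ^ 2 * (1 - x ^ 2) by ring,
    show cc * (r ^ 2 * (1 - x ^ 2)) = cc * r ^ 2 * (1 - x ^ 2) by ring,
    Real.sqrt_mul (by positivity), Real.sqrt_mul hc.le, Real.sqrt_sq hrpos.le]
  rw [one_div, one_div, mul_inv]

lemma intInt_inv_sqrt_quad (hab : a < b) (hc : 0 < cc) :
    IntervalIntegrable (fun t => 1 / Real.sqrt (cc * ((b - t) * (t - a)))) volume a b := by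
  set r := (b - a)/2 with hr
  set m := (a + b)/2 with hm
  have hrpos : 0 < r := by rw [hr]; linarith
  set F : ℝ → ℝ := fun t => 1 / Real.sqrt (cc * ((b - t) * (t - a))) with hF
  have hA : IntervalIntegrable (fun x => (Real.sqrt cc * r)⁻¹ * (1 / Real.sqrt (1 - x ^ 2)))
      volume (-1) 1 := intInt_one_div_sqrt_one_sub_sq.const_mul _
  have heq : (fun x => (Real.sqrt cc * r)⁻¹ * (1 / Real.sqrt (1 - x ^ 2)))
      = fun x => F (r * x + m) := by
    funext x
    rw [hF, hm, hr]
    exact (comp_affine_eq hab hc x).symm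
  rw [heq] at hA
  -- transfer: G y := F (y + m); (fun x => G (r * x)) integrable on -1..1
  have hG : IntervalIntegrable (fun y => F (y + m)) volume (-r) r := by
    have := (IntervalIntegrable.comp_mul_left_iff (f := fun y => F (y + m))
      (a := -r) (b := r) hrpos.ne').2
    have h2 : IntervalIntegrable (fun x => F (r * x + m)) volume (-r / r) (r / r) → True := fun _ => trivial
    -- direct route: use comp_mul_left_iff backwards
    have h3 := (IntervalIntegrable.comp_mul_left_iff (f := fun y => F (y + m))
      (a := -r) (b := r) (c := r) hrpos.ne')
    rw [neg_div, div_self hrpos.ne'] at h3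
    exact h3.1 (by exact hA)
  have hF2 : IntervalIntegrable (fun y => F (y - m + m)) volume (-r + m) (r + m) :=
    hG.comp_sub_right m
  have heq2 : (fun y => F (y - m + m)) = F := by funext y; rw [sub_add_cancel]
  rw [heq2] at hF2
  have hae : -r + m = a := by rw [hr, hm]; ring
  have hbe : r + m = b := by rw [hr, hm]; ring
  rwa [hae, hbe] at hF2

lemma integral_inv_sqrt_quad (hab : a < b) (hc : 0 < cc) :
    ∫ t in a..b, 1 / Real.sqrt (cc * ((b - t) * (t - a))) = π / Real.sqrt cc := by
  set r := (b - a)/2 with hr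
  set m := (a + b)/2 with hm
  have hrpos : 0 < r := by rw [hr]; linarith
  set F : ℝ → ℝ := fun t => 1 / Real.sqrt (cc * ((b - t) * (t - a))) with hF
  have hsub := integral_comp_mul_add (a := (-1:ℝ)) (b := 1) (f := F) (c := r) hrpos.ne' m
  have h1 : (∫ x in (-1:ℝ)..1, F (r * x + m))
      = (Real.sqrt cc * r)⁻¹ * π := by
    have heq : (fun x => F (r * x + m))
        = fun x => (Real.sqrt cc * r)⁻¹ * (1 / Real.sqrt (1 - x ^ 2)) := by
      funext x
      rw [hF, hm, hr]
      exact comp_affine_eq hab hc x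
    rw [heq, intervalIntegral.integral_const_mul, integral_one_div_sqrt_one_sub_sq]
  have hae : r * -1 + m = a := by rw [hr, hm]; ring
  have hbe : r * 1 + m = b := by rw [hr, hm]; ring
  rw [hae, hbe, h1] at hsub
  have hscc : 0 < Real.sqrt cc := Real.sqrt_pos.2 hc
  rw [smul_eq_mul] at hsub
  have : (∫ t in a..b, F t) = r * ((Real.sqrt cc * r)⁻¹ * π) := by
    field_simp at hsub ⊢
    linarith [hsub]
  rw [hF] at this
  rw [this]
  field_simp

end C

end MyAux

open MyAux intervalIntegral

set_option maxHeartbeats 2000000 in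
/-- For `γ = 1 − 2π⁻²`, `I₀(α)` tends to `π/√(2(1−γ)) = (1−γ)⁻¹` as
`α → γ^{−γ}(1−γ)^{γ−1}` from the right. -/
theorem I0_tendsto (γ : ℝ) (hγ : γ = 1 - 2 / π ^ 2) :
    Filter.Tendsto (I0 γ)
        (nhdsWithin (γ ^ (-γ) * (1 - γ) ^ (γ - 1))
          (Ioi (γ ^ (-γ) * (1 - γ) ^ (γ - 1))))
        (nhds (π / Real.sqrt (2 * (1 - γ)))) ∧
      π / Real.sqrt (2 * (1 - γ)) = (1 - γ)⁻¹ := by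
  have hπ := Real.pi_pos
  have hπ2 : (9:ℝ) < π ^ 2 := by nlinarith [Real.pi_gt_three]
  have hfrac : 2 / π ^ 2 < 1 := by rw [div_lt_one (by positivity)]; linarith
  have hfrac0 : 0 < 2 / π ^ 2 := by positivity
  have hγ0 : 0 < γ := by rw [hγ]; linarith
  have hγ1 : γ < 1 := by rw [hγ]; linarith
  constructor
  · -- the limit statement
    show Filter.Tendsto (I0 γ) (nhdsWithin (aStar γ) (Ioi (aStar γ)))
      (nhds (π / Real.sqrt (2 * (1 - γ))))
    set u0 : ℝ := 2 * (1 - γ) with hu0def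
    have hu0 : 0 < u0 := by rw [hu0def]; linarith
    set t0 : ℝ := tStar γ with ht0def
    have ht0 : 0 < t0 := tStar_pos hγ0 hγ1
    have hAps : 0 < aStar γ := aStar_pos hγ0 hγ1
    have hfAt0 : fA γ (aStar γ) t0 = 0 := key2 hγ0 hγ1
    rw [Metric.tendsto_nhdsWithin_nhds]
    intro ε hε
    -- Step 1: choose η
    have hcont : ContinuousAt (fun u : ℝ => π / Real.sqrt u) u0 :=
      ContinuousAt.div continuousAt_const Real.continuous_sqrt.continuousAt
        (ne_of_gt (Real.sqrt_pos.2 hu0))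
    obtain ⟨δ₁, hδ₁pos, hδ₁⟩ := Metric.continuousAt_iff.1 hcont ε hε
    set η : ℝ := min (δ₁/2) (u0/2) with hηdef
    have hη : 0 < η := lt_min (by linarith) (by linarith)
    have hηlt : η < u0 := lt_of_le_of_lt (min_le_right _ _) (by linarith)
    have hηprop : ∀ u : ℝ, |u - u0| ≤ η →
        |π / Real.sqrt u - π / Real.sqrt u0| < ε := by
      intro u hu
      have := hδ₁ (x := u) (by
        rw [Real.dist_eq]
        calc |u - u0| ≤ η := hu
          _ ≤ δ₁/2 := min_le_left _ _
          _ < δ₁ := by linarith)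
      rwa [Real.dist_eq] at this
    -- Step 2: δ₂ for joint continuity of fA''
    have hc2 : ContinuousAt (fun p : ℝ × ℝ => fA'' γ p.1 p.2) (aStar γ, t0) := by
      simp only [fA'']
      have h1 : ContinuousAt (fun p : ℝ × ℝ => p.2 ^ (2*γ-2)) (aStar γ, t0) :=
        continuousAt_snd.rpow_const (Or.inl ht0.ne')
      have h2 : ContinuousAt (fun p : ℝ × ℝ => 2 * p.1 * γ * (2*γ-1)) (aStar γ, t0) := by
        fun_prop
      exact (h2.mul h1).sub continuousAt_const
    obtain ⟨δ₂, hδ₂pos, hδ₂⟩ := Metric.continuousAt_iff.1 hc2 (2*η) (by linarith)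
    have hfA''t0 : fA'' γ (aStar γ) t0 = -(2*u0) := by
      rw [key3 hγ0 hγ1, hu0def]; ring
    set δt : ℝ := min (δ₂/2) (t0/2) with hδtdef
    have hδtpos : 0 < δt := lt_min (by linarith) (by linarith)
    have hδtle2 : δt ≤ δ₂/2 := min_le_left _ _
    have hδtlet0 : δt ≤ t0/2 := min_le_right _ _
    have hstep2 : ∀ β s : ℝ, |β - aStar γ| < δ₂/2 → |s - t0| ≤ δt →
        |fA'' γ β s + 2*u0| < 2*η := by
      intro β s hβ hs
      have hd : dist (β, s) (aStar γ, t0) < δ₂ := by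
        rw [Prod.dist_eq]
        apply max_lt
        · rw [Real.dist_eq]; linarith
        · rw [Real.dist_eq]; linarith [le_trans hs hδtle2]
      have := hδ₂ hd
      rw [Real.dist_eq, hfA''t0, sub_neg_eq_add] at this
      exact this
    -- Step 3: compactness argument
    set T : ℝ := max (t0 + δt) ((aStar γ + 1) ^ ((2 - 2*γ)⁻¹ : ℝ)) with hTdef
    have hTpos : 0 < T := lt_of_lt_of_le (by linarith) (le_max_left _ _)
    have hTlarge : ∀ β s : ℝ, T ≤ s → β ≤ aStar γ + 1 → 0 < β → fA γ β s ≤ -1 := by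
      intro β s hTs hβ hβ0
      have hspos : 0 < s := lt_of_lt_of_le hTpos hTs
      have h1 : aStar γ + 1 ≤ s ^ (2 - 2*γ : ℝ) := by
        have h2 : (aStar γ + 1) ^ ((2-2*γ)⁻¹ : ℝ) ≤ s := le_trans (le_max_right _ _) hTs
        have h3 := Real.rpow_le_rpow (by positivity) h2 (by linarith : (0:ℝ) ≤ 2 - 2*γ)
        rwa [← Real.rpow_mul (by positivity),
          inv_mul_cancel₀ (by linarith : (2-2*γ:ℝ) ≠ 0), Real.rpow_one] at h3
      have h4 : s ^ (2-2*γ:ℝ) * s ^ (2*γ:ℝ) = s ^ 2 := by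
        rw [← Real.rpow_add hspos, show (2-2*γ) + 2*γ = (2:ℝ) by ring, Real.rpow_two]
      have h5 : β * s ^ (2*γ) ≤ s ^ 2 := by
        calc β * s ^ (2*γ) ≤ (aStar γ + 1) * s ^ (2*γ) :=
              mul_le_mul_of_nonneg_right hβ (Real.rpow_nonneg hspos.le _)
          _ ≤ s ^ (2-2*γ:ℝ) * s ^ (2*γ) :=
              mul_le_mul_of_nonneg_right h1 (Real.rpow_nonneg hspos.le _)
          _ = s ^ 2 := h4
      unfold fA; linarith
    set K : Set ℝ := Icc (0:ℝ) (t0 - δt) ∪ Icc (t0 + δt) T with hKdef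
    have hKcpt : IsCompact K := isCompact_Icc.union isCompact_Icc
    have hKne : K.Nonempty := ⟨t0 + δt, Or.inr ⟨le_refl _, le_max_left _ _⟩⟩
    obtain ⟨z, hzK, hzmax'⟩ := hKcpt.exists_isMaxOn hKne (continuous_fA hγ0).continuousOn
    have hzmax : ∀ s ∈ K, fA γ (aStar γ) s ≤ fA γ (aStar γ) z := fun s hs => hzmax' hs
    have hzneg : fA γ (aStar γ) z < 0 := by
      apply fA_aStar_neg hγ0 hγ1
      · rcases hzK with hz | hz
        · exact hz.1
        · exact le_trans (by linarith) hz.1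
      · rcases hzK with hz | hz
        · exact ne_of_lt (lt_of_le_of_lt hz.2 (by linarith))
        · exact ne_of_gt (lt_of_lt_of_le (by linarith) hz.1)
    set m : ℝ := -(fA γ (aStar γ) z) with hmdef
    have hmpos : 0 < m := by rw [hmdef]; linarith
    set M : ℝ := T ^ (2*γ:ℝ) with hMdef
    have hMpos : 0 < M := Real.rpow_pos_of_pos hTpos _
    have hKbound : ∀ s ∈ K, s ^ (2*γ:ℝ) ≤ M := by
      intro s hs
      have h1 : 0 ≤ s ∧ s ≤ T := by
        rcases hs with h | h
        · exact ⟨h.1, le_trans h.2 (le_trans (by linarith) (le_max_left _ _))⟩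
        · exact ⟨le_trans (by linarith) h.1, h.2⟩
      exact Real.rpow_le_rpow h1.1 h1.2 (by linarith)
    set δa : ℝ := min 1 (min (δ₂/2) (m/M)) with hδadef
    have hδapos : 0 < δa :=
      lt_min one_pos (lt_min (by linarith) (div_pos hmpos hMpos))
    have hSsubgen : ∀ β, aStar γ < β → β < aStar γ + δa →
        ∀ t, 0 < t → 0 < fA γ β t → t0 - δt < t ∧ t < t0 + δt := by
      intro β hβ1 hβ2 t ht hft
      have hβA1 : β ≤ aStar γ + 1 := by
        have : δa ≤ 1 := min_le_left _ _
        linarith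
      have key : ∀ s ∈ K, fA γ β s < 0 := by
        intro s hs
        have hdiff : fA γ β s = fA γ (aStar γ) s + (β - aStar γ) * s ^ (2*γ) := by
          unfold fA; ring
        have h1 : fA γ (aStar γ) s ≤ -m := by
          have := hzmax s hs; rw [hmdef]; linarith
        have h2 : (β - aStar γ) * s ^ (2*γ) ≤ (β - aStar γ) * M :=
          mul_le_mul_of_nonneg_left (hKbound s hs) (by linarith)
        have h3 : (β - aStar γ) * M < (m/M) * M := by
          apply mul_lt_mul_of_pos_right _ hMpos
          have : δa ≤ m/M := le_trans (min_le_right _ _) (min_le_right _ _)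
          linarith
        rw [div_mul_cancel₀ _ hMpos.ne'] at h3
        linarith
      constructor
      · by_contra hle
        push_neg at hle
        have : fA γ β t < 0 := key t (Or.inl ⟨ht.le, hle⟩)
        linarith
      · by_contra hge
        push_neg at hge
        rcases le_or_gt t T with hT' | hT'
        · have : fA γ β t < 0 := key t (Or.inr ⟨hge, hT'⟩)
          linarith
        · have : fA γ β t ≤ -1 := hTlarge β t hT'.le hβA1 (by linarith)
          linarith
    -- give δ = δa
    refine ⟨δa, hδapos, ?_⟩
    intro β hβmem hβdist
    have hβ1 : aStar γ < β := hβmem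
    have hβ2 : β < aStar γ + δa := by
      rw [Real.dist_eq] at hβdist
      have := (abs_lt.1 hβdist).2
      linarith
    have hβpos : 0 < β := lt_trans hAps hβ1
    have hβδ2 : |β - aStar γ| < δ₂/2 := by
      rw [Real.dist_eq] at hβdist
      exact lt_of_lt_of_le hβdist (le_trans (min_le_right 1 _) (min_le_left _ _))
    set S : Set ℝ := {t : ℝ | 0 < t ∧ 0 < fA γ β t} with hSdef
    have hSsub : S ⊆ Ioo (t0 - δt) (t0 + δt) := by
      intro t ht
      have := hSsubgen β hβ1 hβ2 t ht.1 ht.2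
      exact ⟨this.1, this.2⟩
    have ht0S : t0 ∈ S := by
      refine ⟨ht0, ?_⟩
      have hdiff : fA γ β t0 = fA γ (aStar γ) t0 + (β - aStar γ) * t0 ^ (2*γ) := by
        unfold fA; ring
      rw [hdiff, hfAt0, zero_add]
      exact mul_pos (by linarith) (Real.rpow_pos_of_pos ht0 _)
    have hSne : S.Nonempty := ⟨t0, ht0S⟩
    have hbddb : BddBelow S := ⟨t0 - δt, fun t ht => (hSsub ht).1.le⟩
    have hbdda : BddAbove S := ⟨t0 + δt, fun t ht => (hSsub ht).2.le⟩
    set a := omegaMinus γ β with hadef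
    set b := omegaPlus γ β with hbdef
    have haS : a = sInf S := rfl
    have hbS : b = sSup S := rfl
    have halb : t0 - δt ≤ a := by
      rw [haS]; exact le_csInf hSne fun t ht => (hSsub ht).1.le
    have hbub : b ≤ t0 + δt := by
      rw [hbS]; exact csSup_le hSne fun t ht => (hSsub ht).2.le
    have hat0 : a ≤ t0 := by rw [haS]; exact csInf_le hbddb ht0S
    have ht0b : t0 ≤ b := by rw [hbS]; exact le_csSup hbdda ht0S
    have hapos : 0 < a := lt_of_lt_of_le (by linarith) halb
    have hSopen : IsOpen S := by
      have hrw : S = Ioi 0 ∩ (fA γ β) ⁻¹' (Ioi 0) := by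
        ext t; simp [hSdef, mem_setOf_eq, and_comm]
      rw [hrw]
      exact isOpen_Ioi.inter ((continuous_fA hγ0).isOpen_preimage _ isOpen_Ioi)
    have hab : a < b := by
      obtain ⟨r, hrpos, hrball⟩ := Metric.isOpen_iff.1 hSopen t0 ht0S
      have h1 : t0 - r/2 ∈ S := hrball (by
        rw [Metric.mem_ball, Real.dist_eq, show t0 - r/2 - t0 = -(r/2) by ring, abs_neg,
          abs_of_nonneg (by linarith)]
        linarith)
      have h2 : t0 + r/2 ∈ S := hrball (by
        rw [Metric.mem_ball, Real.dist_eq, show t0 + r/2 - t0 = r/2 by ring,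
          abs_of_nonneg (by linarith)]
        linarith)
      have hh1 := csInf_le hbddb h1
      have hh2 := le_csSup hbdda h2
      rw [← haS] at hh1
      rw [← hbS] at hh2
      linarith
    -- monotone structure
    set tc : ℝ := (β * γ) ^ ((2 - 2*γ)⁻¹ : ℝ) with htcdef
    have htcpos : 0 < tc := Real.rpow_pos_of_pos (by positivity) _
    have h2γne : (2 - 2*γ : ℝ) ≠ 0 := by linarith
    have htceq : β * γ * tc ^ (2*γ - 2 : ℝ) = 1 := by
      rw [htcdef, ← Real.rpow_mul (by positivity : (0:ℝ) ≤ β * γ),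
        show (2*γ-2 : ℝ) = -(2-2*γ) by ring, mul_neg, inv_mul_cancel₀ h2γne,
        Real.rpow_neg_one]
      exact mul_inv_cancel₀ (by positivity)
    have hmono := fA_strictMonoOn hγ1 hγ0 hβpos htcpos htceq
    have hanti := fA_strictAntiOn hγ1 hγ0 hβpos htcpos htceq
    have hIoo : Ioo a b ⊆ S := by
      intro t ht
      have htpos : 0 < t := lt_trans hapos ht.1
      obtain ⟨t1, ht1S, ht1lt⟩ := exists_lt_of_csInf_lt hSne (haS ▸ ht.1)
      obtain ⟨t2, ht2S, ht2gt⟩ := exists_lt_of_lt_csSup hSne (hbS ▸ ht.2)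
      refine ⟨htpos, ?_⟩
      rcases le_or_gt t tc with httc | httc
      · have := hmono ⟨ht1S.1.le, le_trans ht1lt.le httc⟩ ⟨htpos.le, httc⟩ ht1lt
        have h2 := ht1S.2
        linarith
      · have := hanti (mem_Ici.2 httc.le) (mem_Ici.2 (le_trans httc.le ht2gt.le)) ht2gt
        have h2 := ht2S.2
        linarith
    have hfge : ∀ t ∈ Icc a b, 0 ≤ fA γ β t := by
      have hcl : closure (Ioo a b) ⊆ {t : ℝ | 0 ≤ fA γ β t} :=
        closure_minimal (fun t ht => (hIoo ht).2.le)
          (isClosed_le continuous_const (continuous_fA hγ0))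
      intro t ht
      exact hcl (by rwa [closure_Ioo hab.ne])
    have hanotS : a ∉ S := by
      intro haS'
      obtain ⟨r, hrpos, hrball⟩ := Metric.isOpen_iff.1 hSopen a haS'
      have h1 : a - r/2 ∈ S := hrball (by
        rw [Metric.mem_ball, Real.dist_eq, show a - r/2 - a = -(r/2) by ring, abs_neg,
          abs_of_nonneg (by linarith)]
        linarith)
      have := csInf_le hbddb h1
      rw [← haS] at this
      linarith
    have hbnotS : b ∉ S := by
      intro hbS'
      obtain ⟨r, hrpos, hrball⟩ := Metric.isOpen_iff.1 hSopen b hbS'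
      have h1 : b + r/2 ∈ S := hrball (by
        rw [Metric.mem_ball, Real.dist_eq, show b + r/2 - b = r/2 by ring,
          abs_of_nonneg (by linarith)]
        linarith)
      have := le_csSup hbdda h1
      rw [← hbS] at this
      linarith
    have hfa0 : fA γ β a = 0 := by
      refine le_antisymm ?_ (hfge a ⟨le_refl _, hab.le⟩)
      by_contra h
      push_neg at h
      exact hanotS ⟨hapos, h⟩
    have hfb0 : fA γ β b = 0 := by
      refine le_antisymm ?_ (hfge b ⟨hab.le, le_refl _⟩)
      by_contra h
      push_neg at h
      exact hbnotS ⟨lt_trans hapos hab, h⟩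
    -- f'' bounds
    have hf'' : ∀ x ∈ Ioo a b, |fA'' γ β x + 2*u0| < 2*η := by
      intro x hx
      exact hstep2 β x hβδ2 (abs_le.2 ⟨by linarith [hx.1], by linarith [hx.2]⟩)
    set cminus : ℝ := u0 - η with hcmdef
    set cplus : ℝ := u0 + η with hcpdef
    have hcm : 0 < cminus := by rw [hcmdef]; linarith
    have hcp : 0 < cplus := by rw [hcpdef]; linarith
    have hlow : ∀ t ∈ Icc a b, cminus * ((b - t) * (t - a)) ≤ fA γ β t := by
      apply concave_quad hab (continuous_fA hγ0).continuousOn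
        (fun x hx => hasDerivAt_fA (lt_trans hapos hx.1))
        (fun x hx => hasDerivAt_fA' (lt_trans hapos hx.1))
        hfa0 hfb0
      intro x hx
      have := (abs_lt.1 (hf'' x hx)).2
      rw [hcmdef]
      linarith
    have hup : ∀ t ∈ Icc a b, fA γ β t ≤ cplus * ((b - t) * (t - a)) := by
      apply convex_quad hab (continuous_fA hγ0).continuousOn
        (fun x hx => hasDerivAt_fA (lt_trans hapos hx.1))
        (fun x hx => hasDerivAt_fA' (lt_trans hapos hx.1))
        hfa0 hfb0
      intro x hx
      have := (abs_lt.1 (hf'' x hx)).1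
      rw [hcpdef]
      linarith
    -- integral comparison
    have hIlowInt := intInt_inv_sqrt_quad (cc := cminus) hab hcm
    have hIupInt := intInt_inv_sqrt_quad (cc := cplus) hab hcp
    have hIlowVal := integral_inv_sqrt_quad (cc := cminus) hab hcm
    have hIupVal := integral_inv_sqrt_quad (cc := cplus) hab hcp
    have hptle : ∀ t ∈ Icc a b,
        1 / Real.sqrt (fA γ β t) ≤ 1 / Real.sqrt (cminus * ((b - t) * (t - a))) := by
      intro t ht
      have h0 : 0 ≤ fA γ β t := hfge t ht
      rcases eq_or_lt_of_le h0 with h | h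
      · rw [← h, Real.sqrt_zero, div_zero]
        positivity
      · have hta : a < t := by
          rcases eq_or_lt_of_le ht.1 with he | he
          · exfalso; rw [← he, hfa0] at h; exact lt_irrefl 0 h
          · exact he
        have htb : t < b := by
          rcases eq_or_lt_of_le ht.2 with he | he
          · exfalso; rw [he, hfb0] at h; exact lt_irrefl 0 h
          · exact he
        have hq : 0 < cminus * ((b-t)*(t-a)) :=
          mul_pos hcm (mul_pos (by linarith) (by linarith))
        exact one_div_le_one_div_of_le (Real.sqrt_pos.2 hq)
          (Real.sqrt_le_sqrt (hlow t ht))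
    have hptge : ∀ t ∈ Icc a b,
        1 / Real.sqrt (cplus * ((b - t) * (t - a))) ≤ 1 / Real.sqrt (fA γ β t) := by
      intro t ht
      rcases eq_or_lt_of_le ht.1 with he | hta
      · rw [← he, sub_self, mul_zero, mul_zero, Real.sqrt_zero, div_zero]
        positivity
      · rcases eq_or_lt_of_le ht.2 with he | htb
        · rw [he, sub_self, zero_mul, mul_zero, Real.sqrt_zero, div_zero]
          positivity
        · have htS : t ∈ S := hIoo ⟨hta, htb⟩
          exact one_div_le_one_div_of_le (Real.sqrt_pos.2 htS.2)
            (Real.sqrt_le_sqrt (hup t ht))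
    have hfmeas := meas_inv_sqrt (fA γ β) (continuous_fA hγ0)
    have hfInt : IntervalIntegrable (fun t => 1 / Real.sqrt (fA γ β t)) volume a b := by
      apply hIlowInt.mono_fun hfmeas.restrict
      filter_upwards [ae_restrict_mem measurableSet_Ioc] with t ht
      rw [uIoc_of_le hab.le] at ht
      have ht' : t ∈ Icc a b := ⟨ht.1.le, ht.2⟩
      have h1 : (0:ℝ) ≤ 1 / Real.sqrt (fA γ β t) := by positivity
      have h2 : (0:ℝ) ≤ 1 / Real.sqrt (cminus * ((b-t)*(t-a))) := by positivity
      rw [Real.norm_eq_abs, Real.norm_eq_abs, abs_of_nonneg h1, abs_of_nonneg h2]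
      exact hptle t ht'
    have hI0eq : I0 γ β = ∫ t in a..b, 1 / Real.sqrt (fA γ β t) := rfl
    have hIub : I0 γ β ≤ π / Real.sqrt cminus := by
      rw [hI0eq, ← hIlowVal]
      exact intervalIntegral.integral_mono_on hab.le hfInt hIlowInt hptle
    have hIlb : π / Real.sqrt cplus ≤ I0 γ β := by
      rw [hI0eq, ← hIupVal]
      exact intervalIntegral.integral_mono_on hab.le hIupInt hfInt hptge
    -- conclude
    have h1 := hηprop cminus (by
      rw [show cminus - u0 = -η by rw [hcmdef]; ring, abs_neg, abs_of_nonneg hη.le])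
    have h2 := hηprop cplus (by
      rw [show cplus - u0 = η by rw [hcpdef]; ring, abs_of_nonneg hη.le])
    rw [Real.dist_eq, abs_lt]
    constructor
    · have := (abs_lt.1 h2).1
      linarith
    · have := (abs_lt.1 h1).2
      linarith
  · -- the value computation
    have h1γ : 1 - γ = 2 / π ^ 2 := by rw [hγ]; ring
    rw [h1γ]
    have hsq : Real.sqrt (2 * (2 / π ^ 2)) = 2 / π := by
      rw [show 2 * (2 / π ^ 2) = (2/π)^2 by field_simp]
      exact Real.sqrt_sq (by positivity)
    rw [hsq]
    field_simp
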